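/- If 𝔬 = 𝔡 = 𝔠, then GES fails: there exist a sequence ⟨f_n⟩ of functions [0,1] → ℝ converging pointwise to 0 and an η > 0 such that every subset A ⊆ [0,1] on which ⟨f_n⟩ converges uniformly has Lebesgue outer measure μ*(A) ≤ 1 − η. -/

import Mathlib

open MeasureTheory Filter Set Pointwise
open scoped ENNReal

/-- Eventual domination: `α ≤* β` iff `α n ≤ β n` for all but finitely many `n`. -/
def EvDom (α β : ℕ → ℕ) : Prop := ∀ᶠ n in atTop, α n ≤ β n

/-- The dominating number `𝔡`: the least cardinality of a cofinal subset of
`(ℕ → ℕ, ≤*)`. -/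
noncomputable def dNum : Cardinal :=
  sInf {c | ∃ S : Set (ℕ → ℕ), (∀ α, ∃ β ∈ S, EvDom α β) ∧ Cardinal.mk S = c}

/-- `𝔬`: the least cardinality of a subset of `[0,1]` of full Lebesgue outer measure. -/
noncomputable def oNum : Cardinal :=
  sInf {c | ∃ Y : Set ℝ, Y ⊆ Set.Icc 0 1 ∧ volume Y = 1 ∧ Cardinal.mk Y = c}


lemma density_point {S : Set ℝ} (hS : MeasurableSet S) (h1 : volume S ≠ 0) :
    ∃ x ∈ S, Tendsto
      (fun r => volume (S ∩ Metric.closedBall x r) / volume (Metric.closedBall x r))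
      (nhdsWithin 0 (Set.Ioi 0)) (nhds 1) := by
  have hae := Besicovitch.ae_tendsto_measure_inter_div_of_measurableSet volume hS
  by_contra h
  push_neg at h
  apply h1
  refine measure_mono_null (fun x hx => ?_) (ae_iff.mp hae)
  simp only [Set.mem_setOf_eq]
  intro hcon
  exact h x hx (by rwa [Set.indicator_of_mem hx, Pi.one_apply] at hcon)

lemma steinhausQ {S W : Set ℝ} (hS : MeasurableSet S) (hW : MeasurableSet W)
    (h1 : volume S ≠ 0) (h2 : volume W ≠ 0) :
    ∃ q : ℚ, (((q : ℝ) +ᵥ S) ∩ W).Nonempty := by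
  obtain ⟨x, hxS, hx⟩ := density_point hS h1
  obtain ⟨y, hyW, hy⟩ := density_point hW h2
  have hc1 : ENNReal.ofReal (7/8) < 1 := by
    rw [← ENNReal.ofReal_one]
    exact ENNReal.ofReal_lt_ofReal_iff_of_nonneg (by norm_num) |>.mpr (by norm_num)
  have ev1 := hx.eventually (eventually_gt_nhds hc1)
  have ev2 := hy.eventually (eventually_gt_nhds hc1)
  obtain ⟨r, hr1, hr2, hr0⟩ := (ev1.and (ev2.and eventually_mem_nhdsWithin)).exists
  rw [Set.mem_Ioi] at hr0
  have hball : ∀ z : ℝ, volume (Metric.closedBall z r) = ENNReal.ofReal (2*r) := by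
    intro z; rw [Real.volume_closedBall]
  have hb0 : (ENNReal.ofReal (2*r)) ≠ 0 := by
    simp only [ne_eq, ENNReal.ofReal_eq_zero, not_le]; linarith
  have hkey : ∀ z : ℝ, ∀ U : Set ℝ,
      ENNReal.ofReal (7/8) < volume (U ∩ Metric.closedBall z r) / volume (Metric.closedBall z r) →
      ENNReal.ofReal (7*r/4) < volume (U ∩ Metric.closedBall z r) := by
    intro z U hU
    have := (ENNReal.lt_div_iff_mul_lt (Or.inl (by rw [hball]; exact hb0))
      (Or.inl (by rw [hball]; exact ENNReal.ofReal_ne_top))).mp hU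
    rw [hball, ← ENNReal.ofReal_mul (by norm_num)] at this
    convert this using 2
    ring
  have hSx := hkey x S hr1
  have hWy := hkey y W hr2
  obtain ⟨q, hq⟩ := exists_rat_near (y - x) (show (0:ℝ) < r/8 by linarith)
  by_contra hne
  push_neg at hne
  have hempty : ((q : ℝ) +ᵥ S) ∩ W = ∅ := hne q
  set J := Metric.closedBall y (9*r/8) with hJ
  have hdisj : Disjoint (((q:ℝ) +ᵥ S) ∩ J) (W ∩ J) := by
    rw [Set.disjoint_iff_inter_eq_empty]
    have : (((q:ℝ) +ᵥ S) ∩ J) ∩ (W ∩ J) ⊆ (((q:ℝ) +ᵥ S) ∩ W) := by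
      intro z hz; exact ⟨hz.1.1, hz.2.1⟩
    rw [hempty] at this
    exact Set.subset_empty_iff.mp this
  have hU : volume (S ∩ Metric.closedBall x r) ≤ volume (((q:ℝ) +ᵥ S) ∩ J) := by
    rw [← MeasureTheory.measure_vadd (μ := volume) ((q:ℝ)) (S ∩ Metric.closedBall x r)]
    apply measure_mono
    rintro z ⟨w, ⟨hwS, hwB⟩, rfl⟩
    refine ⟨⟨w, hwS, rfl⟩, ?_⟩
    have h1' : |w - x| ≤ r := by
      have := Metric.mem_closedBall.mp hwB
      rwa [Real.dist_eq] at this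
    rw [hJ, Metric.mem_closedBall, Real.dist_eq]
    have heq : (fun x => (q:ℝ) +ᵥ x) w - y = (w - x) - ((y - x) - q) := by
      simp only [vadd_eq_add]; ring
    rw [heq]
    calc |(w - x) - ((y - x) - (q:ℝ))| ≤ |w - x| + |(y - x) - (q:ℝ)| := abs_sub _ _
      _ ≤ r + r/8 := add_le_add h1' (le_of_lt hq)
      _ ≤ 9*r/8 := by linarith
  have hV : volume (W ∩ Metric.closedBall y r) ≤ volume (W ∩ J) := by
    apply measure_mono
    exact Set.inter_subset_inter_right _ (Metric.closedBall_subset_closedBall (by linarith))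
  have hsum : volume ((((q:ℝ) +ᵥ S) ∩ J) ∪ (W ∩ J)) ≤ volume J :=
    measure_mono (Set.union_subset Set.inter_subset_right Set.inter_subset_right)
  rw [measure_union hdisj (hW.inter measurableSet_closedBall)] at hsum
  have hJvol : volume J = ENNReal.ofReal (2*(9*r/8)) := by
    rw [hJ, Real.volume_closedBall]
  have hbig : ENNReal.ofReal (7*r/4) + ENNReal.ofReal (7*r/4) <
      volume (((q:ℝ) +ᵥ S) ∩ J) + volume (W ∩ J) :=
    ENNReal.add_lt_add (lt_of_lt_of_le hSx hU) (lt_of_lt_of_le hWy hV)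
  rw [← ENNReal.ofReal_add (by linarith) (by linarith)] at hbig
  have hcontra := lt_of_lt_of_le hbig hsum
  rw [hJvol] at hcontra
  have := (ENNReal.ofReal_lt_ofReal_iff_of_nonneg (by linarith)).mp hcontra
  linarith

lemma dom_small (hd : dNum = Cardinal.continuum) :
    ∃ α : ℝ → ℕ → ℕ,
      ∀ g : ℕ → ℕ, Cardinal.mk {x : ℝ | ∀ k, α x k ≤ g k} < Cardinal.continuum := by
  have hTT : True := trivial
  have hT : Cardinal.mk Cardinal.continuum.ord.ToType = Cardinal.continuum := Cardinal.mk_ord_toType _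
  obtain ⟨e⟩ : Nonempty (ℝ ≃ Cardinal.continuum.ord.ToType) := Cardinal.eq.mp (by rw [hT, Cardinal.mk_real])
  obtain ⟨e2⟩ : Nonempty ((ℕ → ℕ) ≃ Cardinal.continuum.ord.ToType) := Cardinal.eq.mp (by
    rw [hT, Cardinal.mk_arrow]
    simp [Cardinal.aleph0_power_aleph0])
  have key : ∀ t : Cardinal.continuum.ord.ToType, ∃ a : ℕ → ℕ, ∀ s, s ≤ t → ¬ EvDom a (e2.symm s) := by
    intro t
    by_contra hcon
    push_neg at hcon
    have hmem : dNum ≤ Cardinal.mk (e2.symm '' {s | s ≤ t}) := by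
      refine csInf_le' ⟨_, fun a => ?_, rfl⟩
      obtain ⟨s, hs, hev⟩ := hcon a
      exact ⟨e2.symm s, ⟨s, hs, rfl⟩, hev⟩
    have hsmall : Cardinal.mk (e2.symm '' {s | s ≤ t}) < Cardinal.continuum := by
      refine lt_of_le_of_lt (Cardinal.mk_image_le) ?_
      have hsub : {s | s ≤ t} ⊆ insert t (Set.Iio t) := by
        intro s hs
        have hs' : s ≤ t := hs
        rw [Set.mem_insert_iff, Set.mem_Iio]
        exact (lt_or_eq_of_le hs').symm.imp id id
      refine lt_of_le_of_lt (Cardinal.mk_le_mk_of_subset hsub) ?_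
      refine lt_of_le_of_lt (Cardinal.mk_insert_le) ?_
      exact Cardinal.add_lt_of_lt Cardinal.aleph0_le_continuum
        (Cardinal.mk_Iio_toType_ord_lt t)
        (lt_of_lt_of_le Cardinal.one_lt_aleph0 Cardinal.aleph0_le_continuum)
    rw [hd] at hmem
    exact absurd (lt_of_le_of_lt hmem hsmall) (lt_irrefl _)
  choose a ha using key
  refine ⟨fun x => a (e x), fun g => ?_⟩
  have hsub : {x : ℝ | ∀ k, a (e x) k ≤ g k} ⊆ e ⁻¹' (Set.Iio (e2 g)) := by
    intro x hx
    simp only [Set.mem_preimage, Set.mem_Iio]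
    by_contra hlt
    push_neg at hlt
    refine ha (e x) (e2 g) hlt ?_
    rw [Equiv.symm_apply_apply]
    exact Filter.Eventually.of_forall hx
  refine lt_of_le_of_lt (Cardinal.mk_le_mk_of_subset hsub) ?_
  refine lt_of_le_of_lt (Cardinal.mk_preimage_of_injective _ _ e.injective) ?_
  exact Cardinal.mk_Iio_toType_ord_lt _

lemma satur_full {A : Set ℝ} (hA : A ⊆ Set.Icc 0 1) (h0 : volume A ≠ 0) :
    volume ((⋃ q : ℚ, ((q:ℝ) +ᵥ A)) ∩ Set.Icc 0 1) = 1 := by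
  set B := (⋃ q : ℚ, ((q:ℝ) +ᵥ A)) ∩ Set.Icc (0:ℝ) 1 with hBdef
  have hT : MeasurableSet (toMeasurable volume B) := measurableSet_toMeasurable _ _
  set W := Set.Icc (0:ℝ) 1 \ toMeasurable volume B with hWdef
  have hWmeas : MeasurableSet W := measurableSet_Icc.diff hT
  suffices hW0 : volume W = 0 by
    refine le_antisymm ?_ ?_
    · calc volume B ≤ volume (Set.Icc (0:ℝ) 1) := measure_mono inter_subset_right
        _ = 1 := by simp [Real.volume_Icc]
    · calc (1:ℝ≥0∞) = volume (Set.Icc (0:ℝ) 1) := by simp [Real.volume_Icc]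
        _ ≤ volume (Set.Icc (0:ℝ) 1 ∩ toMeasurable volume B) + volume W :=
            measure_le_inter_add_diff _ _ _
        _ = volume (Set.Icc (0:ℝ) 1 ∩ toMeasurable volume B) := by rw [hW0, add_zero]
        _ ≤ volume (toMeasurable volume B) := measure_mono inter_subset_right
        _ = volume B := measure_toMeasurable _
  by_contra hW0
  have key : ∀ q : ℚ, volume (toMeasurable volume A ∩ ((-(q:ℝ)) +ᵥ W)) = 0 := by
    intro q
    rw [Measure.measure_toMeasurable_inter_of_sFinite (hWmeas.const_vadd _) A]
    have hemp : A ∩ ((-(q:ℝ)) +ᵥ W) = ∅ := by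
      ext a
      simp only [Set.mem_inter_iff, Set.mem_empty_iff_false, iff_false, not_and]
      rintro haA ⟨w, hwW, rfl⟩
      refine hwW.2 (subset_toMeasurable _ _ ?_)
      refine ⟨Set.mem_iUnion.mpr ⟨q, ⟨(-(q:ℝ)) +ᵥ w, haA, ?_⟩⟩, hwW.1⟩
      simp [vadd_eq_add]
    rw [hemp, measure_empty]
  set U := ⋃ q : ℚ, ((-(q:ℝ)) +ᵥ W) with hUdef
  have hUmeas : MeasurableSet U := MeasurableSet.iUnion fun q => hWmeas.const_vadd _
  set S := (toMeasurable volume A ∩ Set.Icc (0:ℝ) 1) \ U with hSdef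
  have hSmeas : MeasurableSet S :=
    ((measurableSet_toMeasurable _ _).inter measurableSet_Icc).diff hUmeas
  have hnull : volume ((toMeasurable volume A ∩ Set.Icc (0:ℝ) 1) ∩ U) = 0 := by
    refine measure_mono_null ?_ (measure_iUnion_null fun q => key q)
    intro z hz
    obtain ⟨q, hq⟩ := Set.mem_iUnion.mp hz.2
    exact Set.mem_iUnion.mpr ⟨q, hz.1.1, hq⟩
  have hS0 : volume S ≠ 0 := by
    intro hS0
    apply h0
    have h1 : volume (toMeasurable volume A ∩ Set.Icc (0:ℝ) 1) = 0 := by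
      have := measure_le_inter_add_diff volume
        (toMeasurable volume A ∩ Set.Icc (0:ℝ) 1) U
      rw [hnull, zero_add] at this
      exact le_antisymm (le_trans this (le_of_eq hS0)) zero_le
    exact measure_mono_null (Set.subset_inter (subset_toMeasurable _ _) hA) h1
  obtain ⟨q, z, hz1, hz2⟩ := steinhausQ hSmeas hWmeas hS0 hW0
  obtain ⟨s, hsS, rfl⟩ := hz1
  refine hsS.2 (Set.mem_iUnion.mpr ⟨q, ⟨(q:ℝ) +ᵥ s, hz2, ?_⟩⟩)
  simp [vadd_eq_add]

lemma small_null (ho' : oNum = Cardinal.continuum)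
    {A : Set ℝ} (hA : A ⊆ Set.Icc 0 1)
    (hcard : Cardinal.mk A < Cardinal.continuum) : volume A = 0 := by
  by_contra h0
  have hfull := satur_full hA h0
  have hle : oNum ≤ Cardinal.mk (((⋃ q : ℚ, ((q:ℝ) +ᵥ A)) ∩ Set.Icc 0 1) : Set ℝ) :=
    csInf_le' ⟨_, inter_subset_right, hfull, rfl⟩
  have hlt : Cardinal.mk (((⋃ q : ℚ, ((q:ℝ) +ᵥ A)) ∩ Set.Icc 0 1) : Set ℝ) <
      Cardinal.continuum := by
    calc Cardinal.mk (((⋃ q : ℚ, ((q:ℝ) +ᵥ A)) ∩ Set.Icc 0 1) : Set ℝ)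
        ≤ Cardinal.mk ((⋃ q : ℚ, ((q:ℝ) +ᵥ A)) : Set ℝ) :=
          Cardinal.mk_le_mk_of_subset inter_subset_left
      _ ≤ Cardinal.mk ℚ * ⨆ q : ℚ, Cardinal.mk (((q:ℝ) +ᵥ A) : Set ℝ) :=
          Cardinal.mk_iUnion_le _
      _ ≤ Cardinal.aleph0 * Cardinal.mk A := by
          rw [Cardinal.mkRat]
          exact mul_le_mul_right (ciSup_le' fun q => by
            rw [← image_vadd]; exact Cardinal.mk_image_le) _
      _ < Cardinal.continuum :=
          Cardinal.mul_lt_of_lt Cardinal.aleph0_le_continuum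
            Cardinal.aleph0_lt_continuum hcard
  rw [ho'] at hle
  exact absurd (lt_of_le_of_lt hle hlt) (lt_irrefl _)

theorem stmt13 (ho : oNum = dNum) (hd : dNum = Cardinal.continuum) :
    ∃ f : ℕ → ℝ → ℝ,
      (∀ x ∈ Set.Icc (0:ℝ) 1, Tendsto (fun n => f n x) atTop (nhds 0)) ∧
      ∃ η : ℝ, 0 < η ∧
        ∀ A ⊆ Set.Icc (0:ℝ) 1, TendstoUniformlyOn f 0 atTop A →
          volume A ≤ ENNReal.ofReal (1 - η) := by
  have hoc : oNum = Cardinal.continuum := ho.trans hd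
  obtain ⟨α, hα⟩ := dom_small hd
  set β : ℝ → ℕ → ℕ := fun x n => n + (Finset.range (n+1)).sup (α x) with hβdef
  have hβmono : ∀ x, Monotone (β x) := by
    intro x m n hmn
    exact add_le_add hmn (Finset.sup_mono (Finset.range_subset_range.mpr (by omega)))
  have hβge : ∀ x n, n ≤ β x n := fun x n => Nat.le_add_right _ _
  have hαβ : ∀ x k, α x k ≤ β x k := by
    intro x k
    exact le_trans (Finset.le_sup (Finset.mem_range.mpr (Nat.lt_succ_self k)))
      (Nat.le_add_left _ _)
  have hex : ∀ x n, ∃ m, n < β x m :=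
    fun x n => ⟨n+1, lt_of_lt_of_le (Nat.lt_succ_self n) (hβge x (n+1))⟩
  set D : ℕ → ℝ → ℕ := fun n x => Nat.find (hex x n) with hDdef
  refine ⟨fun n x => 1/((D n x : ℝ)+1), ?_, 1/2, by norm_num, ?_⟩
  · intro x _
    have hD : Tendsto (fun n => D n x) atTop atTop := by
      rw [tendsto_atTop_atTop]
      intro m
      refine ⟨β x m, fun n hn => ?_⟩
      by_contra h
      push_neg at h
      have h1 : n < β x (D n x) := Nat.find_spec (hex x n)
      have h2 : β x (D n x) ≤ β x m := hβmono x (le_of_lt h)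
      omega
    exact tendsto_one_div_add_atTop_nhds_zero_nat.comp hD
  · intro A hA hU
    have hβbound : ∀ m : ℕ, ∃ N : ℕ, ∀ x ∈ A, β x m ≤ N := by
      intro m
      have hε : (0:ℝ) < 1/(m+2) := by positivity
      obtain ⟨N, hN⟩ := ((Metric.tendstoUniformlyOn_iff.mp hU) _ hε).exists
      refine ⟨N, fun x hx => ?_⟩
      have h3 := hN x hx
      have hDpos : (0:ℝ) < 1/((D N x : ℝ)+1) := by positivity
      rw [Pi.zero_apply, Real.dist_eq, zero_sub, abs_neg, abs_of_pos hDpos] at h3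
      have h4 : (m:ℝ) + 2 < (D N x : ℝ) + 1 := by
        have ha : (0:ℝ) < (m:ℝ)+2 := by positivity
        have hb : (0:ℝ) < (D N x : ℝ)+1 := by positivity
        rw [div_lt_div_iff₀ hb ha] at h3
        linarith
      have h5 : m + 1 < D N x := by
        have : (m:ℝ) + 1 < (D N x : ℝ) := by linarith
        exact_mod_cast this
      by_contra hcon
      push_neg at hcon
      have h6 : D N x ≤ m := Nat.find_le hcon
      omega
    choose g hg using hβbound
    have hAsub : A ⊆ {x : ℝ | ∀ k, α x k ≤ g k} :=
      fun x hx k => le_trans (hαβ x k) (hg k x hx)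
    have hcard : Cardinal.mk A < Cardinal.continuum :=
      lt_of_le_of_lt (Cardinal.mk_le_mk_of_subset hAsub) (hα g)
    rw [small_null hoc hA hcard]
    exact zero_le
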